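/- Let ε ∈ [0,1/4], let P_ld be a local deterministic bipartite conditional probability distribution on 3-bit alphabets, and let p ≥ 0 be such that p·P_ld(x,y|u,v) ≤ P^{3,ε}(x,y|u,v) for all x,y,u,v ∈ {0,1}³. Then p ≤ (ε/2)²·(1/2 − ε/2). -/

import Mathlib

open Finset

/-- n-bit strings. -/
abbrev Bits (n : ℕ) := Fin n → Bool

/-- A bipartite conditional "box" on n-bit alphabets: `P x y u v` is the
probability of outputs `(x, y)` given inputs `(u, v)`. -/
abbrev Box (n : ℕ) := Bits n → Bits n → Bits n → Bits n → ℝ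

/-- `P` is a bipartite conditional probability distribution. -/
def IsBox {n : ℕ} (P : Box n) : Prop :=
  (∀ x y u v, 0 ≤ P x y u v) ∧
  (∀ u v, ∑ x : Bits n, ∑ y : Bits n, P x y u v = 1)

/-- `P` is non-signalling. -/
def NonSignalling {n : ℕ} (P : Box n) : Prop :=
  (∀ y v u u', ∑ x : Bits n, P x y u v = ∑ x : Bits n, P x y u' v) ∧
  (∀ x u v v', ∑ y : Bits n, P x y u v = ∑ y : Bits n, P x y u v')

/-- The local deterministic box given by response functions `f` (Alice) and `g` (Bob). -/
def detBox {n : ℕ} (f g : Bits n → Bits n) : Box n :=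
  fun x y u v => if x = f u ∧ y = g v then 1 else 0

/-- `P` is local deterministic. -/
def IsLocalDet {n : ℕ} (P : Box n) : Prop :=
  ∃ f g : Bits n → Bits n, P = detBox f g

/-- `P` is local: a convex combination of local deterministic boxes. -/
def IsLocal {n : ℕ} (P : Box n) : Prop :=
  ∃ w : (Bits n → Bits n) × (Bits n → Bits n) → ℝ,
    (∀ fg, 0 ≤ w fg) ∧ (∑ fg, w fg = 1) ∧
    (∀ x y u v, P x y u v =
      ∑ fg : (Bits n → Bits n) × (Bits n → Bits n), w fg * detBox fg.1 fg.2 x y u v)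

/-- The local part of `P`: the maximal weight `p` such that `P` is a convex
combination of a local box (weight `p`) and a non-signalling box (weight `1 - p`). -/
noncomputable def localPart {n : ℕ} (P : Box n) : ℝ :=
  sSup {p : ℝ | 0 ≤ p ∧ p ≤ 1 ∧
    ∃ PL PNS : Box n, IsBox PL ∧ IsLocal PL ∧ IsBox PNS ∧ NonSignalling PNS ∧
      ∀ x y u v, P x y u v = p * PL x y u v + (1 - p) * PNS x y u v}

/-- Single-copy isotropic ε-PRB entries. -/
noncomputable def isoPRB1 (ε : ℝ) (x y u v : Bool) : ℝ :=
  if xor x y = (u && v) then (1 - ε) / 2 else ε / 2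

/-- The system of n independent isotropic ε-PRBs. -/
noncomputable def isoPRB (n : ℕ) (ε : ℝ) : Box n :=
  fun x y u v => ∏ i : Fin n, isoPRB1 ε (x i) (y i) (u i) (v i)

/-- Single-copy maximally biased δ-PRB entries. -/
noncomputable def biasedPRB1 (δ : ℝ) (x y u v : Bool) : ℝ :=
  if u && v then
    match x, y with
    | false, false => 0
    | true,  false => 1 / 2 - δ / 2
    | false, true  => 1 / 2 + δ / 2
    | true,  true  => 0
  else
    match x, y with
    | false, false => 1 / 2 - δ / 2
    | true,  false => 0
    | false, true  => δ
    | true,  true  => 1 / 2 - δ / 2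

/-- The system of n independent maximally biased δ-PRBs. -/
noncomputable def biasedPRB (n : ℕ) (δ : ℝ) : Box n :=
  fun x y u v => ∏ i : Fin n, biasedPRB1 δ (x i) (y i) (u i) (v i)

/-- Key combinatorial lemma: every deterministic strategy on 3 parallel CHSH
games errs in at least two coordinates on some input pair. -/
lemma key_two_errors (f g : Bits 3 → Bits 3) :
    ∃ u v : Bits 3, ∃ i j : Fin 3, i ≠ j ∧
      xor (f u i) (g v i) ≠ (u i && v i) ∧
      xor (f u j) (g v j) ≠ (u j && v j) := by
  set z : Bits 3 := fun _ => false with hz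
  by_cases hcase : ∃ u : Bits 3, ∃ i j : Fin 3, i ≠ j ∧
      xor (f u i) (g z i) = true ∧ xor (f u j) (g z j) = true
  · obtain ⟨u, i, j, hij, hi, hj⟩ := hcase
    refine ⟨u, z, i, j, hij, ?_, ?_⟩ <;> simp [hz] at hi hj ⊢ <;> simp [hi, hj]
  · push_neg at hcase
    set o : Bits 3 := fun _ => true with ho
    set w : Bits 3 := fun i => !(xor (g o i) (g z i)) with hw
    -- in every coordinate where xor (f w i) (g z i) = false, (w, o) errs
    have herr : ∀ i : Fin 3, xor (f w i) (g z i) = false →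
        xor (f w i) (g o i) ≠ (w i && o i) := by
      intro i hci
      show xor (f w i) (g o i) ≠ ((!(xor (g o i) (g z i))) && true)
      revert hci
      cases f w i <;> cases g z i <;> cases g o i <;> decide
    -- at most one coordinate has xor (f w i) (g z i) = true
    have hc : ∀ i j : Fin 3, i ≠ j →
        xor (f w i) (g z i) = false ∨ xor (f w j) (g z j) = false := by
      intro i j hij
      by_cases h' : xor (f w i) (g z i) = true
      · exact Or.inr (by simpa using hcase w i j hij h')
      · exact Or.inl (by simpa using h')
    by_cases h0 : xor (f w 0) (g z 0) = false
    · rcases hc 1 2 (by decide) with h' | h'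
      · exact ⟨w, o, 0, 1, by decide, herr 0 h0, herr 1 h'⟩
      · exact ⟨w, o, 0, 2, by decide, herr 0 h0, herr 2 h'⟩
    · have h1 := (hc 0 1 (by decide)).resolve_left h0
      have h2 := (hc 0 2 (by decide)).resolve_left h0
      exact ⟨w, o, 1, 2, by decide, herr 1 h1, herr 2 h2⟩

/-- any local deterministic strategy has weight at most
`(ε/2)²·(1/2 − ε/2)` in three isotropic ε-PRBs. -/
theorem stmt7 (ε : ℝ) (hε0 : 0 ≤ ε) (hε : ε ≤ 1 / 4)
    (Pld : Box 3) (hld : IsLocalDet Pld) (p : ℝ) (hp : 0 ≤ p)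
    (h : ∀ x y u v, p * Pld x y u v ≤ isoPRB 3 ε x y u v) :
    p ≤ (ε / 2) ^ 2 * (1 / 2 - ε / 2) := by
  obtain ⟨f, g, rfl⟩ := hld
  obtain ⟨u, v, i, j, hij, hi, hj⟩ := key_two_errors f g
  have h1 := h (f u) (g v) u v
  have hdet : detBox f g (f u) (g v) u v = 1 := by simp [detBox]
  rw [hdet, mul_one] at h1
  set F : Fin 3 → ℝ := fun k => isoPRB1 ε (f u k) (g v k) (u k) (v k) with hF
  have hub : ∀ k, F k ≤ (1 - ε) / 2 := by
    intro k; simp only [hF, isoPRB1]; split <;> linarith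
  have hlb : ∀ k, 0 ≤ F k := by
    intro k; simp only [hF, isoPRB1]; split <;> linarith
  have hFi : F i = ε / 2 := by simp only [hF, isoPRB1]; rw [if_neg hi]
  have hFj : F j = ε / 2 := by simp only [hF, isoPRB1]; rw [if_neg hj]
  have hprod : isoPRB 3 ε (f u) (g v) u v = F 0 * F 1 * F 2 := by
    simp [isoPRB, hF, Fin.prod_univ_three]
  rw [hprod] at h1
  have hkey : F 0 * F 1 * F 2 ≤ (ε / 2) ^ 2 * (1 / 2 - ε / 2) := by
    fin_cases i <;> fin_cases j <;> simp_all <;>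
      nlinarith [hub 0, hub 1, hub 2, hlb 0, hlb 1, hlb 2, sq_nonneg ε]
  linarith
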